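/- Identification of the marginal controlled spillover effect (Theorem 3.6, MCSE, d = 1): for every (p₀,p₁) ∈ (0,1)², the iterated mixed second partial derivative ∂²F¹/∂p∂q exists at (p₀,p₁) and equals (φ^{11}(p₀,p₁) − φ^{10}(p₀,p₁))·c(p₀,p₁); the mixed second partial derivative ∂²C/∂p∂q exists at (p₀,p₁) and equals c(p₀,p₁) > 0; consequently the ratio (∂²F¹/∂p∂q)(p₀,p₁) / (∂²C/∂p∂q)(p₀,p₁) equals the marginal controlled spillover effect MCSE^{(1)}(p₀,p₁) := φ^{11}(p₀,p₁) − φ^{10}(p₀,p₁). -/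

import Mathlib

open MeasureTheory ProbabilityTheory

open MeasureTheory ProbabilityTheory Set

/-- A function continuous on the open unit square and vanishing outside it is measurable. -/
lemma measurable_of_suppS {f : ℝ × ℝ → ℝ}
    (hcont : ContinuousOn f (Set.Ioo (0:ℝ) 1 ×ˢ Set.Ioo (0:ℝ) 1))
    (hsupp : ∀ x ∉ Set.Ioo (0:ℝ) 1 ×ˢ Set.Ioo (0:ℝ) 1, f x = 0) :
    Measurable f := by
  set S := Set.Ioo (0:ℝ) 1 ×ˢ Set.Ioo (0:ℝ) 1 with hS
  have hSopen : IsOpen S := isOpen_Ioo.prod isOpen_Ioo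
  apply measurable_of_isOpen
  intro U hU
  have hsplit : f ⁻¹' U = (S ∩ f ⁻¹' U) ∪ (Sᶜ ∩ f ⁻¹' U) := by
    ext x; by_cases hx : x ∈ S <;> simp [hx]
  rw [hsplit]
  apply MeasurableSet.union
  · exact (hcont.isOpen_inter_preimage hSopen hU).measurableSet
  · by_cases h0 : (0:ℝ) ∈ U
    · have : Sᶜ ∩ f ⁻¹' U = Sᶜ := by
        ext x
        simp only [Set.mem_inter_iff, Set.mem_compl_iff, Set.mem_preimage,
          and_iff_left_iff_imp]
        intro hx; rw [hsupp x hx]; exact h0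
      rw [this]; exact hSopen.measurableSet.compl
    · have : Sᶜ ∩ f ⁻¹' U = ∅ := by
        ext x
        simp only [Set.mem_inter_iff, Set.mem_compl_iff, Set.mem_preimage,
          Set.mem_empty_iff_false, iff_false, not_and]
        intro hx hxU; rw [hsupp x hx] at hxU; exact h0 hxU
      rw [this]; exact MeasurableSet.empty

lemma integrable_of_suppS {f : ℝ × ℝ → ℝ} (hmeas : Measurable f) {B : ℝ}
    (hbd : ∀ x, |f x| ≤ B)
    (hsupp : ∀ x ∉ Set.Ioo (0:ℝ) 1 ×ˢ Set.Ioo (0:ℝ) 1, f x = 0) :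
    Integrable f (volume : Measure (ℝ × ℝ)) := by
  set S := Set.Ioo (0:ℝ) 1 ×ˢ Set.Ioo (0:ℝ) 1 with hS
  have hSmeas : MeasurableSet S := (measurableSet_Ioo.prod measurableSet_Ioo)
  have hSvol : volume S < ⊤ := by
    rw [hS, Measure.volume_eq_prod, Measure.prod_prod, Real.volume_Ioo]
    simp
  have hbound : Integrable (S.indicator fun _ => B) (volume : Measure (ℝ × ℝ)) :=
    (integrable_indicator_iff hSmeas).2 (integrableOn_const hSvol.ne)
  refine hbound.mono' hmeas.aestronglyMeasurable (Filter.Eventually.of_forall fun x => ?_)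
  by_cases hx : x ∈ S
  · rw [Set.indicator_of_mem hx, Real.norm_eq_abs]; exact hbd x
  · rw [Set.indicator_of_notMem hx, Real.norm_eq_abs, hsupp x hx]
    simp

/-- Derivative in the second variable of the rectangle integral. -/
lemma key_derivq {g : ℝ × ℝ → ℝ} (hmeas : Measurable g) {B : ℝ}
    (hbd : ∀ x, |g x| ≤ B)
    (hsupp : ∀ x ∉ Set.Ioo (0:ℝ) 1 ×ˢ Set.Ioo (0:ℝ) 1, g x = 0)
    (hcont : ContinuousOn g (Set.Ioo (0:ℝ) 1 ×ˢ Set.Ioo (0:ℝ) 1))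
    {p p₁ : ℝ} (hp : p ∈ Set.Ioo (0:ℝ) 1) (hp₁ : p₁ ∈ Set.Ioo (0:ℝ) 1) :
    HasDerivAt (fun q => ∫ x in Set.Ioc (0:ℝ) p ×ˢ Set.Ioc (0:ℝ) q, g x)
      (∫ u in (0:ℝ)..p, g (u, p₁)) p₁ := by
  have hSopen : IsOpen (Set.Ioo (0:ℝ) 1 ×ˢ Set.Ioo (0:ℝ) 1) := isOpen_Ioo.prod isOpen_Ioo
  have hgint : Integrable g (volume : Measure (ℝ × ℝ)) :=
    integrable_of_suppS hmeas hbd hsupp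
  set ν : Measure ℝ := volume.restrict (Set.Ioc (0:ℝ) p) with hν
  haveI : IsFiniteMeasure ν := ⟨by rw [hν, Measure.restrict_apply_univ]; exact measure_Ioc_lt_top⟩
  set h : ℝ → ℝ := fun v => ∫ u, g (u, v) ∂ν with hh
  have hmeas_h : StronglyMeasurable h :=
    hmeas.stronglyMeasurable.integral_prod_left'
  have hC : ∀ v, ‖h v‖ ≤ B * (ν Set.univ).toReal := fun v =>
    norm_integral_le_of_norm_le_const (Filter.Eventually.of_forall fun u => by
      rw [Real.norm_eq_abs]; exact hbd (u, v))
  have hint_h : IntervalIntegrable h volume 0 p₁ := by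
    rw [intervalIntegrable_iff, Set.uIoc_of_le hp₁.1.le]
    exact Measure.integrableOn_of_bounded measure_Ioc_lt_top.ne
      hmeas_h.aestronglyMeasurable (Filter.Eventually.of_forall hC)
  have hcont_h : ContinuousAt h p₁ := by
    apply continuousAt_of_dominated (bound := fun _ => B)
    · exact Filter.Eventually.of_forall fun v =>
        (hmeas.comp (measurable_id.prodMk measurable_const)).aestronglyMeasurable
    · exact Filter.Eventually.of_forall fun v => Filter.Eventually.of_forall fun u => by
        rw [Real.norm_eq_abs]; exact hbd (u, v)
    · exact integrable_const B
    · have hnull : ν (Set.Ioo (0:ℝ) p)ᶜ = 0 := by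
        rw [hν, Measure.restrict_apply (measurableSet_Ioo (a := (0:ℝ)) (b := p)).compl]
        refine measure_mono_null (fun u hu => ?_) (measure_singleton p)
        rcases hu with ⟨hu1, hu2⟩
        simp only [Set.mem_compl_iff, Set.mem_Ioo, not_and, not_lt] at hu1
        have := hu1 hu2.1
        exact le_antisymm hu2.2 this
      refine (measure_eq_zero_iff_ae_notMem.mp hnull).mono fun u hu => ?_
      simp only [Set.mem_compl_iff, not_not] at hu
      have hmem : (u, p₁) ∈ Set.Ioo (0:ℝ) 1 ×ˢ Set.Ioo (0:ℝ) 1 :=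
        ⟨⟨hu.1, hu.2.trans hp.2⟩, hp₁⟩
      exact (hcont.continuousAt (hSopen.mem_nhds hmem)).comp
        ((continuous_const.prodMk continuous_id).continuousAt)
  have hFTC : HasDerivAt (fun q => ∫ v in (0:ℝ)..q, h v) (h p₁) p₁ :=
    intervalIntegral.integral_hasDerivAt_right hint_h
      hmeas_h.stronglyMeasurableAtFilter hcont_h
  have hEq : (fun q => ∫ x in Set.Ioc (0:ℝ) p ×ˢ Set.Ioc (0:ℝ) q, g x)
      =ᶠ[nhds p₁] fun q => ∫ v in (0:ℝ)..q, h v := by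
    filter_upwards [eventually_gt_nhds hp₁.1] with q hq
    rw [intervalIntegral.integral_of_le hq.le]
    have hig : Integrable g (ν.prod (volume.restrict (Set.Ioc (0:ℝ) q))) := by
      rw [hν, Measure.prod_restrict, ← Measure.volume_eq_prod]
      exact hgint.integrableOn
    calc ∫ x in Set.Ioc (0:ℝ) p ×ˢ Set.Ioc (0:ℝ) q, g x
        = ∫ z, g z ∂(ν.prod (volume.restrict (Set.Ioc (0:ℝ) q))) := by
          rw [hν, Measure.prod_restrict, ← Measure.volume_eq_prod]
      _ = ∫ v, (∫ u, g (u, v) ∂ν) ∂(volume.restrict (Set.Ioc (0:ℝ) q)) :=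
          MeasureTheory.integral_prod_symm g hig
  have hval : h p₁ = ∫ u in (0:ℝ)..p, g (u, p₁) := by
    rw [intervalIntegral.integral_of_le hp.1.le, hh, hν]
  exact hval ▸ (hFTC.congr_of_eventuallyEq hEq)

/-- Derivative in the first variable of the partial integral. -/
lemma key_derivp {g : ℝ × ℝ → ℝ} (hmeas : Measurable g) {B : ℝ}
    (hbd : ∀ x, |g x| ≤ B)
    (hcont : ContinuousOn g (Set.Ioo (0:ℝ) 1 ×ˢ Set.Ioo (0:ℝ) 1))
    {p₀ p₁ : ℝ} (hp₀ : p₀ ∈ Set.Ioo (0:ℝ) 1) (hp₁ : p₁ ∈ Set.Ioo (0:ℝ) 1) :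
    HasDerivAt (fun p => ∫ u in (0:ℝ)..p, g (u, p₁)) (g (p₀, p₁)) p₀ := by
  have hSopen : IsOpen (Set.Ioo (0:ℝ) 1 ×ˢ Set.Ioo (0:ℝ) 1) := isOpen_Ioo.prod isOpen_Ioo
  set f : ℝ → ℝ := fun u => g (u, p₁) with hf
  have hfm : Measurable f := hmeas.comp (measurable_id.prodMk measurable_const)
  have hfi : IntervalIntegrable f volume 0 p₀ := by
    rw [intervalIntegrable_iff, Set.uIoc_of_le hp₀.1.le]
    exact Measure.integrableOn_of_bounded measure_Ioc_lt_top.ne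
      hfm.aestronglyMeasurable (Filter.Eventually.of_forall fun u => by
        rw [Real.norm_eq_abs]; exact hbd (u, p₁))
  have hfc : ContinuousAt f p₀ :=
    (hcont.continuousAt (hSopen.mem_nhds ⟨hp₀, hp₁⟩)).comp
      ((continuous_id.prodMk continuous_const).continuousAt)
  exact intervalIntegral.integral_hasDerivAt_right hfi
    hfm.stronglyMeasurable.stronglyMeasurableAtFilter hfc

/-- Identification of the marginal controlled spillover effect (Theorem 3.6, MCSE, d = 1):
for every `(p₀,p₁) ∈ (0,1)²` the iterated mixed second partial derivative of `F¹` exists and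
equals `(φ¹¹ − φ¹⁰)·c`, the one of the copula `C` exists and equals `c > 0`, and their ratio
equals the marginal controlled spillover effect `MCSE¹(p₀,p₁) = φ¹¹(p₀,p₁) − φ¹⁰(p₀,p₁)`. -/
theorem mcse_identification
    {Ω 𝒰 : Type*} [MeasurableSpace Ω] [MeasurableSpace 𝒰]
    (μ : Measure Ω) [IsProbabilityMeasure μ]
    (U : Ω → 𝒰) (V₀ V₁ : Ω → ℝ)
    (hU : Measurable U) (hV₀ : Measurable V₀) (hV₁ : Measurable V₁)
    -- V₀, V₁ uniformly distributed on (0,1)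
    (hV₀unif : Measure.map V₀ μ = volume.restrict (Set.Ioo (0:ℝ) 1))
    (hV₁unif : Measure.map V₁ μ = volume.restrict (Set.Ioo (0:ℝ) 1))
    -- bounded measurable outcome function (`true` codes treatment 1, `false` codes 0)
    (m : Bool → Bool → 𝒰 → ℝ) (hm : ∀ d d', Measurable (m d d'))
    (hm_bdd : ∃ B, ∀ d d' u, |m d d' u| ≤ B)
    -- the joint law of (V₀,V₁) has density c w.r.t. 2-dimensional Lebesgue measure,
    -- concentrated on (0,1)², continuous, bounded above and away from zero there
    (c : ℝ × ℝ → ℝ) (hc_meas : Measurable c) (hc_nonneg : ∀ x, 0 ≤ c x)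
    (hc_density : Measure.map (fun ω => (V₀ ω, V₁ ω)) μ
      = volume.withDensity fun x => ENNReal.ofReal (c x))
    (hc_supp : ∀ x : ℝ × ℝ, x ∉ Set.Ioo (0:ℝ) 1 ×ˢ Set.Ioo (0:ℝ) 1 → c x = 0)
    (hc_cont : ContinuousOn c (Set.Ioo (0:ℝ) 1 ×ˢ Set.Ioo (0:ℝ) 1))
    (hc_bdd : ∃ B, ∀ x ∈ Set.Ioo (0:ℝ) 1 ×ˢ Set.Ioo (0:ℝ) 1, c x ≤ B)
    (hc_pos : ∃ ε > (0:ℝ), ∀ x ∈ Set.Ioo (0:ℝ) 1 ×ˢ Set.Ioo (0:ℝ) 1, ε ≤ c x)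
    -- continuous bounded marginal treatment response functions φ^{dd'}
    (φ : Bool → Bool → ℝ × ℝ → ℝ)
    (hφ_cont : ∀ d d', ContinuousOn (φ d d') (Set.Ioo (0:ℝ) 1 ×ˢ Set.Ioo (0:ℝ) 1))
    (hφ_bdd : ∃ B, ∀ d d' x, |φ d d' x| ≤ B)
    (hφ_disint : ∀ d d', ∀ p ∈ Set.Ioc (0:ℝ) 1, ∀ q ∈ Set.Ioc (0:ℝ) 1,
      (∫ ω, m d d' (U ω) * (if V₀ ω ≤ p then (1:ℝ) else 0)
        * (if V₁ ω ≤ q then (1:ℝ) else 0) ∂μ)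
      = ∫ x in Set.Ioc (0:ℝ) p ×ˢ Set.Ioc (0:ℝ) q, φ d d' x * c x)
    -- the copula of (V₀, V₁)
    (C : ℝ → ℝ → ℝ)
    (hC : ∀ p q, C p q = (μ {ω | V₀ ω ≤ p ∧ V₁ ω ≤ q}).toReal)
    -- identified conditional-mean function F¹
    (F1 : ℝ → ℝ → ℝ)
    (hF1 : ∀ p q, F1 p q =
      (∫ ω, m true true (U ω) * (if V₀ ω ≤ p then (1:ℝ) else 0)
        * (if V₁ ω ≤ q then (1:ℝ) else 0) ∂μ)
      + ∫ ω, m true false (U ω) * (if V₀ ω ≤ p then (1:ℝ) else 0)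
        * (if q < V₁ ω then (1:ℝ) else 0) ∂μ)
    -- the evaluation point
    (p₀ p₁ : ℝ) (hp₀ : p₀ ∈ Set.Ioo (0:ℝ) 1) (hp₁ : p₁ ∈ Set.Ioo (0:ℝ) 1) :
    ∃ A B : ℝ,
      -- the iterated mixed second partial derivative of F¹ at (p₀,p₁) exists and equals A
      (∃ DFq : ℝ → ℝ,
        (∀ᶠ p in nhds p₀, HasDerivAt (fun q => F1 p q) (DFq p) p₁) ∧
        HasDerivAt DFq A p₀) ∧
      -- the iterated mixed second partial derivative of C at (p₀,p₁) exists and equals B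
      (∃ DCq : ℝ → ℝ,
        (∀ᶠ p in nhds p₀, HasDerivAt (fun q => C p q) (DCq p) p₁) ∧
        HasDerivAt DCq B p₀) ∧
      A = (φ true true (p₀, p₁) - φ true false (p₀, p₁)) * c (p₀, p₁) ∧
      B = c (p₀, p₁) ∧ 0 < B ∧
      A / B = φ true true (p₀, p₁) - φ true false (p₀, p₁) := by

  obtain ⟨Bm, hBm⟩ := hm_bdd
  obtain ⟨Bc, hBc⟩ := hc_bdd
  obtain ⟨Bφ, hBφ⟩ := hφ_bdd
  obtain ⟨ε, hε, hεle⟩ := hc_pos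
  set S := Set.Ioo (0:ℝ) 1 ×ˢ Set.Ioo (0:ℝ) 1 with hSdef
  have hc_bd : ∀ x, |c x| ≤ max Bc 0 := by
    intro x
    by_cases hx : x ∈ S
    · rw [abs_of_nonneg (hc_nonneg x)]; exact le_max_of_le_left (hBc x hx)
    · rw [hc_supp x hx]; simp
  have hc_int : Integrable c (volume : Measure (ℝ × ℝ)) :=
    integrable_of_suppS hc_meas hc_bd hc_supp
  have hBφ0 : 0 ≤ Bφ := (abs_nonneg _).trans (hBφ true true (0, 0))
  have hgdd : ∀ d d' : Bool, Measurable (fun x => φ d d' x * c x) ∧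
      (∀ x, |φ d d' x * c x| ≤ Bφ * max Bc 0) ∧
      Integrable (fun x => φ d d' x * c x) (volume : Measure (ℝ × ℝ)) := by
    intro d d'
    have hsupp' : ∀ x ∉ S, φ d d' x * c x = 0 := fun x hx => by
      rw [hc_supp x hx, mul_zero]
    have hcont' : ContinuousOn (fun x => φ d d' x * c x) S := (hφ_cont d d').mul hc_cont
    have hmeas' : Measurable fun x => φ d d' x * c x := measurable_of_suppS hcont' hsupp'
    have hbd' : ∀ x, |φ d d' x * c x| ≤ Bφ * max Bc 0 := fun x => by
      rw [abs_mul]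
      exact mul_le_mul (hBφ d d' x) (hc_bd x) (abs_nonneg _) hBφ0
    exact ⟨hmeas', hbd', integrable_of_suppS hmeas' hbd' hsupp'⟩
  set gF : ℝ × ℝ → ℝ := fun x => φ true true x * c x - φ true false x * c x with hgFdef
  have hgF_supp : ∀ x ∉ S, gF x = 0 := fun x hx => by
    simp only [hgFdef]; rw [hc_supp x hx]; ring
  have hgF_cont : ContinuousOn gF S :=
    ((hφ_cont true true).mul hc_cont).sub ((hφ_cont true false).mul hc_cont)
  have hgF_meas : Measurable gF := measurable_of_suppS hgF_cont hgF_supp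
  have hgF_bd : ∀ x, |gF x| ≤ Bφ * max Bc 0 + Bφ * max Bc 0 := fun x => by
    calc |gF x| ≤ |φ true true x * c x| + |φ true false x * c x| := abs_sub _ _
    _ ≤ _ := add_le_add ((hgdd true true).2.1 x) ((hgdd true false).2.1 x)
  have hV₁ae : ∀ᵐ ω ∂μ, V₁ ω ∈ Set.Ioo (0:ℝ) 1 := by
    have h0 : μ (V₁ ⁻¹' (Set.Ioo (0:ℝ) 1)ᶜ) = 0 := by
      rw [← Measure.map_apply hV₁ measurableSet_Ioo.compl, hV₁unif,
        Measure.restrict_apply measurableSet_Ioo.compl]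
      simp
    exact (measure_eq_zero_iff_ae_notMem.mp h0).mono fun ω hω => by simpa using hω
  have hmeasV₀ : ∀ p : ℝ, Measurable fun ω => if V₀ ω ≤ p then (1:ℝ) else 0 := fun p =>
    Measurable.ite (measurableSet_le hV₀ measurable_const) measurable_const measurable_const
  have hmeasV₁ : ∀ q : ℝ, Measurable fun ω => if V₁ ω ≤ q then (1:ℝ) else 0 := fun q =>
    Measurable.ite (measurableSet_le hV₁ measurable_const) measurable_const measurable_const
  have hmeasV₁' : ∀ q : ℝ, Measurable fun ω => if q < V₁ ω then (1:ℝ) else 0 := fun q =>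
    Measurable.ite (measurableSet_lt measurable_const hV₁) measurable_const measurable_const
  have hIbound : ∀ f : Ω → ℝ, Measurable f → (∀ ω, |f ω| ≤ max Bm 0) → Integrable f μ := by
    intro f hf hb
    exact (integrable_const (max Bm 0)).mono' hf.aestronglyMeasurable
      (Filter.Eventually.of_forall fun ω => by rw [Real.norm_eq_abs]; exact hb ω)
  have habs : ∀ (d d' : Bool) (u : 𝒰) (a b : ℝ), |a| ≤ 1 → |b| ≤ 1 →
      |m d d' u * a * b| ≤ max Bm 0 := by
    intro d d' u a b ha hb
    rw [abs_mul, abs_mul]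
    calc |m d d' u| * |a| * |b| ≤ max Bm 0 * 1 * 1 :=
      mul_le_mul (mul_le_mul (le_max_of_le_left (hBm d d' u)) ha (abs_nonneg _)
        (le_max_right _ _)) hb (abs_nonneg _) (by positivity)
    _ = max Bm 0 := by ring
  have hI1 : ∀ (d d' : Bool) (p q : ℝ),
      Integrable (fun ω => m d d' (U ω) * (if V₀ ω ≤ p then (1:ℝ) else 0)
        * (if V₁ ω ≤ q then (1:ℝ) else 0)) μ := by
    intro d d' p q
    refine hIbound _ ((((hm d d').comp hU).mul (hmeasV₀ p)).mul (hmeasV₁ q)) fun ω => ?_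
    exact habs d d' (U ω) _ _ (by split <;> simp) (by split <;> simp)
  have hC_eq : ∀ p q : ℝ, C p q = ∫ x in Set.Ioc (0:ℝ) p ×ˢ Set.Ioc (0:ℝ) q, c x := by
    intro p q
    rw [hC]
    have hA : MeasurableSet (Set.Iic p ×ˢ Set.Iic q : Set (ℝ × ℝ)) :=
      measurableSet_Iic.prod measurableSet_Iic
    have hpre : {ω | V₀ ω ≤ p ∧ V₁ ω ≤ q}
        = (fun ω => (V₀ ω, V₁ ω)) ⁻¹' (Set.Iic p ×ˢ Set.Iic q) := by
      ext ω; simp [Set.mem_prod]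
    rw [hpre, ← Measure.map_apply (hV₀.prodMk hV₁) hA, hc_density,
      withDensity_apply _ hA,
      ← ofReal_integral_eq_lintegral_ofReal hc_int.integrableOn
        (Filter.Eventually.of_forall fun x => hc_nonneg x),
      ENNReal.toReal_ofReal (setIntegral_nonneg hA fun x _ => hc_nonneg x)]
    rw [← integral_indicator hA,
      ← integral_indicator (measurableSet_Ioc.prod measurableSet_Ioc)]
    congr 1
    funext x
    by_cases hx : x ∈ Set.Ioc (0:ℝ) p ×ˢ Set.Ioc (0:ℝ) q
    · rw [Set.indicator_of_mem hx,
        Set.indicator_of_mem (show x ∈ Set.Iic p ×ˢ Set.Iic q from ⟨hx.1.2, hx.2.2⟩)]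
    · rw [Set.indicator_of_notMem hx]
      by_cases hx2 : x ∈ Set.Iic p ×ˢ Set.Iic q
      · rw [Set.indicator_of_mem hx2]
        exact hc_supp x fun hxS => hx ⟨⟨hxS.1.1, hx2.1⟩, hxS.2.1, hx2.2⟩
      · rw [Set.indicator_of_notMem hx2]
  have hF1_eq : ∀ p ∈ Set.Ioo (0:ℝ) 1, ∀ q ∈ Set.Ioo (0:ℝ) 1,
      F1 p q = (∫ x in Set.Ioc (0:ℝ) p ×ˢ Set.Ioc (0:ℝ) q, gF x)
        + ∫ x in Set.Ioc (0:ℝ) p ×ˢ Set.Ioc (0:ℝ) 1, φ true false x * c x := by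
    intro p hp q hq
    have hpI : p ∈ Set.Ioc (0:ℝ) 1 := ⟨hp.1, hp.2.le⟩
    have hqI : q ∈ Set.Ioc (0:ℝ) 1 := ⟨hq.1, hq.2.le⟩
    have h1I : (1:ℝ) ∈ Set.Ioc (0:ℝ) 1 := ⟨one_pos, le_refl 1⟩
    have hsplit : (∫ ω, m true false (U ω) * (if V₀ ω ≤ p then (1:ℝ) else 0)
          * (if q < V₁ ω then (1:ℝ) else 0) ∂μ)
        = (∫ ω, m true false (U ω) * (if V₀ ω ≤ p then (1:ℝ) else 0)
          * (if V₁ ω ≤ 1 then (1:ℝ) else 0) ∂μ)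
          - ∫ ω, m true false (U ω) * (if V₀ ω ≤ p then (1:ℝ) else 0)
          * (if V₁ ω ≤ q then (1:ℝ) else 0) ∂μ := by
      rw [← integral_sub (hI1 true false p 1) (hI1 true false p q)]
      apply integral_congr_ae
      filter_upwards [hV₁ae] with ω hω
      rcases le_or_gt (V₁ ω) q with h | h
      · simp only [if_neg (not_lt.2 h), if_pos h, if_pos hω.2.le]; ring
      · simp only [if_pos h, if_neg (not_le.2 h), if_pos hω.2.le]; ring
    rw [hF1, hsplit, hφ_disint true true p hpI q hqI, hφ_disint true false p hpI 1 h1I,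
      hφ_disint true false p hpI q hqI]
    have hsub : (∫ x in Set.Ioc (0:ℝ) p ×ˢ Set.Ioc (0:ℝ) q, gF x)
        = (∫ x in Set.Ioc (0:ℝ) p ×ˢ Set.Ioc (0:ℝ) q, φ true true x * c x)
          - ∫ x in Set.Ioc (0:ℝ) p ×ˢ Set.Ioc (0:ℝ) q, φ true false x * c x :=
      integral_sub (hgdd true true).2.2.integrableOn (hgdd true false).2.2.integrableOn
    rw [hsub]; ring
  have hcpos : 0 < c (p₀, p₁) := lt_of_lt_of_le hε (hεle (p₀, p₁) ⟨hp₀, hp₁⟩)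
  refine ⟨gF (p₀, p₁), c (p₀, p₁),
    ⟨fun p => ∫ u in (0:ℝ)..p, gF (u, p₁), ?_, ?_⟩,
    ⟨fun p => ∫ u in (0:ℝ)..p, c (u, p₁), ?_, ?_⟩, ?_, rfl, hcpos, ?_⟩
  · filter_upwards [isOpen_Ioo.mem_nhds hp₀] with p hp
    have hd := (key_derivq hgF_meas hgF_bd hgF_supp hgF_cont hp hp₁).add_const
      (∫ x in Set.Ioc (0:ℝ) p ×ˢ Set.Ioc (0:ℝ) 1, φ true false x * c x)
    apply hd.congr_of_eventuallyEq
    filter_upwards [isOpen_Ioo.mem_nhds hp₁] with q hq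
    exact hF1_eq p hp q hq
  · exact key_derivp hgF_meas hgF_bd hgF_cont hp₀ hp₁
  · filter_upwards [isOpen_Ioo.mem_nhds hp₀] with p hp
    have hd := key_derivq hc_meas hc_bd hc_supp hc_cont hp hp₁
    apply hd.congr_of_eventuallyEq
    filter_upwards [isOpen_Ioo.mem_nhds hp₁] with q hq
    exact hC_eq p q
  · exact key_derivp hc_meas hc_bd hc_cont hp₀ hp₁
  · simp only [hgFdef]; ring
  · rw [div_eq_iff (ne_of_gt hcpos)]
    simp only [hgFdef]; ring
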